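/- Let (Y,d) be a metric space and let k : Y × Y → ℝ be a positive, symmetric, bounded kernel such that the family {k(·,y) : y ∈ Y} is uniformly equicontinuous on Y. Let μ be a tight Borel probability measure on Y and let ε > 0. Then there exist m ∈ ℕ and points x_1,…,x_m ∈ Y such that the measure ν := (1/m)∑_{j=1}^m δ_{x_j} satisfies sup_{x∈Y} |U^ν(x) − U^μ(x)| ≤ ε. -/

import Mathlib

open MeasureTheory ENNReal
open scoped BigOperators

namespace Rendezvous

variable {X : Type*}

/-- The `n`-th Chebyshev constant `Mₙ(H,L)` of `L` with respect to `H` for the kernel `k`. -/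
noncomputable def chebMn (k : X → X → ℝ≥0∞) (n : ℕ) (H L : Set X) : ℝ≥0∞ :=
  ⨆ w : Fin n → H, ⨅ x : L, (∑ j, k (x : X) ((w j : X))) / (n : ℝ≥0∞)

/-- The `n`-th dual Chebyshev constant `M̄ₙ(H,L)`. -/
noncomputable def chebMnDual (k : X → X → ℝ≥0∞) (n : ℕ) (H L : Set X) : ℝ≥0∞ :=
  ⨅ w : Fin n → H, ⨆ x : L, (∑ j, k (x : X) ((w j : X))) / (n : ℝ≥0∞)

/-- The Chebyshev constant `M(H,L) = sup_{n ≥ 1} Mₙ(H,L)`. -/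
noncomputable def chebM (k : X → X → ℝ≥0∞) (H L : Set X) : ℝ≥0∞ :=
  ⨆ n : ℕ, ⨆ (_ : 1 ≤ n), chebMn k n H L

/-- The dual Chebyshev constant `M̄(H,L) = inf_{n ≥ 1} M̄ₙ(H,L)`. -/
noncomputable def chebMDual (k : X → X → ℝ≥0∞) (H L : Set X) : ℝ≥0∞ :=
  ⨅ n : ℕ, ⨅ (_ : 1 ≤ n), chebMnDual k n H L

/-- The potential `U^μ(x) = ∫ k(x,y) dμ(y)` of a measure. -/
noncomputable def pot [MeasurableSpace X] (k : X → X → ℝ≥0∞) (μ : Measure X) (x : X) : ℝ≥0∞ :=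
  ∫⁻ y, k x y ∂μ

/-- `μ` is a tight (inner regular w.r.t. compact sets) Borel probability measure
concentrated on `H`. -/
def TightProbOn [TopologicalSpace X] [MeasurableSpace X] (μ : Measure X) (H : Set X) : Prop :=
  IsProbabilityMeasure μ ∧ μ.InnerRegular ∧ μ Hᶜ = 0

/-- The quasi-uniform energy `q(H,L) = inf_{μ ∈ M₁(H)} sup_{x ∈ L} U^μ(x)`. -/
noncomputable def qUp [TopologicalSpace X] [MeasurableSpace X] (k : X → X → ℝ≥0∞)
    (H L : Set X) : ℝ≥0∞ :=
  ⨅ (μ : Measure X) (_ : TightProbOn μ H), ⨆ x : L, pot k μ (x : X)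

/-- The dual quasi-uniform energy `q̲(H,L) = sup_{μ ∈ M₁(H)} inf_{x ∈ L} U^μ(x)`. -/
noncomputable def qLow [TopologicalSpace X] [MeasurableSpace X] (k : X → X → ℝ≥0∞)
    (H L : Set X) : ℝ≥0∞ :=
  ⨆ (μ : Measure X) (_ : TightProbOn μ H), ⨅ x : L, pot k μ (x : X)

end Rendezvous

open Rendezvous

/-- Let `(Y,d)` be a metric space with a positive, symmetric, bounded
kernel `k` such that `{k(·,y) : y ∈ Y}` is uniformly equicontinuous, `μ` a tight
Borel probability measure on `Y` and `ε > 0`. Then there are `m ∈ ℕ` and points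
`x_1,…,x_m ∈ Y` such that the potential of `ν = (1/m) ∑ δ_{x_j}` approximates the
potential of `μ` within `ε` uniformly on `Y`. -/
theorem potential_approx_by_discrete {Y : Type*} [MetricSpace Y]
    [MeasurableSpace Y] [BorelSpace Y]
    (k : Y → Y → ℝ) (hpos : ∀ x y : Y, 0 < k x y) (hsymm : ∀ x y : Y, k x y = k y x)
    (hbdd : ∃ C : ℝ, ∀ x y : Y, k x y ≤ C)
    (hequi : ∀ ε > (0 : ℝ), ∃ δ > (0 : ℝ), ∀ x x' y : Y,
      dist x x' < δ → |k x y - k x' y| < ε)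
    (μ : Measure Y) (hμ : IsProbabilityMeasure μ) (hreg : μ.InnerRegular)
    (ε : ℝ) (hε : 0 < ε) :
    ∃ (m : ℕ) (_ : 0 < m) (z : Fin m → Y),
      ∀ x : Y,
        |(∫ y, k x y ∂((m : ℝ≥0∞)⁻¹ • ∑ j : Fin m, MeasureTheory.Measure.dirac (z j)))
            - ∫ y, k x y ∂μ| ≤ ε := by
  classical
  obtain ⟨C₀, hC₀⟩ := hbdd
  set C : ℝ := max C₀ 1 with hCdef
  have hC : ∀ x y, k x y ≤ C := fun x y => le_trans (hC₀ x y) (le_max_left _ _)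
  have hC1 : (1:ℝ) ≤ C := le_max_right _ _
  have hCpos : (0:ℝ) < C := lt_of_lt_of_le one_pos hC1
  have hnonneg : ∀ x y, 0 ≤ k x y := fun x y => (hpos x y).le
  -- continuity of k x ·
  have hcont : ∀ x : Y, Continuous (fun y => k x y) := by
    intro x
    have h2 : Continuous (fun y => k y x) := by
      rw [Metric.continuous_iff]
      intro b ε' hε'
      obtain ⟨δ, hδ0, h⟩ := hequi ε' hε'
      exact ⟨δ, hδ0, fun a ha => by rw [Real.dist_eq]; exact h a b x ha⟩
    simpa only [hsymm] using h2
  have hint : ∀ (x : Y) (ν : Measure Y) [IsFiniteMeasure ν],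
      Integrable (fun y => k x y) ν := by
    intro x ν _
    refine (integrable_const C).mono' (hcont x).aestronglyMeasurable (ae_of_all _ ?_)
    intro y
    rw [Real.norm_eq_abs, abs_of_nonneg (hnonneg x y)]
    exact hC x y
  obtain ⟨δ, hδpos, hδ⟩ := hequi (ε/4) (by linarith)
  set η : ℝ := min (ε / (8*C)) (1/2) with hηdef
  have hηpos : 0 < η := lt_min (by positivity) (by norm_num)
  have hηhalf : η ≤ 1/2 := min_le_right _ _
  have hηC : C * η ≤ ε/8 := by
    have h1 : η ≤ ε / (8*C) := min_le_left _ _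
    calc C * η ≤ C * (ε/(8*C)) := by nlinarith
    _ = ε/8 := by field_simp
  -- compact K with μ K > 1 - η
  have h1 : (ENNReal.ofReal (1 - η)) < μ Set.univ := by
    rw [measure_univ]
    exact ENNReal.ofReal_lt_one.mpr (by linarith)
  obtain ⟨K, -, hKc, hKμ⟩ := hreg.innerRegular MeasurableSet.univ _ h1
  have hKμ' : 1 - η ≤ (μ K).toReal :=
    (ENNReal.ofReal_le_iff_le_toReal (measure_ne_top μ K)).mp hKμ.le
  have hKne : K.Nonempty := by
    refine MeasureTheory.nonempty_of_measure_ne_zero (μ := μ) ?_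
    intro h0
    rw [h0] at hKμ
    exact (not_lt.mpr zero_le) hKμ
  -- finite subcover by δ-balls
  obtain ⟨t, ht⟩ := hKc.elim_finite_subcover (fun c : Y => Metric.ball c δ)
    (fun _ => Metric.isOpen_ball)
    (fun y _ => Set.mem_iUnion.mpr ⟨y, Metric.mem_ball_self hδpos⟩)
  set n := t.card with hndef
  set c : Fin n → Y := fun i => (t.equivFin.symm i : Y) with hcdef
  have hn : 0 < n := by
    obtain ⟨y, hy⟩ := hKne
    obtain ⟨cy, hcy, -⟩ := Set.mem_iUnion₂.mp (ht hy)
    exact Finset.card_pos.mpr ⟨cy, hcy⟩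
  -- disjointified pieces
  set B : Fin n → Set Y :=
    fun i => Metric.ball (c i) δ \ ⋃ (j : Fin n) (_ : j < i), Metric.ball (c j) δ with hBdef
  have hBmeas : ∀ i, MeasurableSet (B i) := fun i =>
    Metric.isOpen_ball.measurableSet.diff
      (MeasurableSet.iUnion fun j => MeasurableSet.iUnion fun _ =>
        Metric.isOpen_ball.measurableSet)
  have hBsub : ∀ i, B i ⊆ Metric.ball (c i) δ := fun i => Set.diff_subset
  have hBdisj : Pairwise (Function.onFun Disjoint B) := by
    intro i j hij
    rcases Ne.lt_or_gt hij with h | h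
    · exact Set.disjoint_left.mpr fun y hyi hyj =>
        hyj.2 (Set.mem_iUnion₂.mpr ⟨i, h, hyi.1⟩)
    · exact Set.disjoint_right.mpr fun y hyj hyi =>
        hyi.2 (Set.mem_iUnion₂.mpr ⟨j, h, hyj.1⟩)
  set V : Set Y := ⋃ i, B i with hVdef
  have hVmeas : MeasurableSet V := MeasurableSet.iUnion hBmeas
  have hKV : K ⊆ V := by
    intro y hy
    obtain ⟨cy, hcy, hy'⟩ := Set.mem_iUnion₂.mp (ht hy)
    set S : Finset (Fin n) := Finset.univ.filter (fun i => y ∈ Metric.ball (c i) δ) with hSdef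
    have hSne : S.Nonempty := by
      refine ⟨t.equivFin ⟨cy, hcy⟩, ?_⟩
      simp only [hSdef, Finset.mem_filter, Finset.mem_univ, true_and, hcdef,
        Equiv.symm_apply_apply]
      exact hy'
    set i := S.min' hSne with hidef
    have hiS : i ∈ S := S.min'_mem hSne
    refine Set.mem_iUnion.mpr ⟨i, ?_, ?_⟩
    · simpa [hSdef] using hiS
    · intro hmem
      obtain ⟨j, hjlt, hjball⟩ := Set.mem_iUnion₂.mp hmem
      have hjS : j ∈ S := by
        simp only [hSdef, Finset.mem_filter, Finset.mem_univ, true_and]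
        exact hjball
      exact absurd (S.min'_le j hjS) (not_le.mpr hjlt)
  -- weights
  set w : Fin n → ℝ := fun i => (μ (B i)).toReal with hwdef
  have hwnonneg : ∀ i, 0 ≤ w i := fun i => ENNReal.toReal_nonneg
  set W : ℝ := ∑ i, w i with hWdef
  have hμV : μ V = ∑ i, μ (B i) := by
    rw [hVdef, measure_iUnion hBdisj hBmeas, tsum_fintype]
  have hWeq : W = (μ V).toReal := by
    rw [hμV, ENNReal.toReal_sum (fun i _ => measure_ne_top μ _)]
  have hWle : W ≤ 1 := by
    rw [hWeq]
    have := prob_le_one (μ := μ) (s := V)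
    calc (μ V).toReal ≤ (1 : ℝ≥0∞).toReal :=
      ENNReal.toReal_mono one_ne_top this
    _ = 1 := by simp
  have hWge : 1 - η ≤ W := by
    rw [hWeq]
    exact le_trans hKμ' (ENNReal.toReal_mono (measure_ne_top μ _) (measure_mono hKV))
  have hWpos : 0 < W := by linarith
  have hVc : (μ Vᶜ).toReal ≤ η := by
    have hcompl : μ Vᶜ = 1 - μ V := by
      rw [measure_compl hVmeas (measure_ne_top μ _), measure_univ]
    have hμVge : ENNReal.ofReal (1 - η) ≤ μ V := le_trans hKμ.le (measure_mono hKV)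
    have h2 : μ Vᶜ ≤ ENNReal.ofReal η := by
      rw [hcompl]
      calc 1 - μ V ≤ 1 - ENNReal.ofReal (1 - η) := tsub_le_tsub_left hμVge 1
      _ = ENNReal.ofReal 1 - ENNReal.ofReal (1 - η) := by rw [ENNReal.ofReal_one]
      _ = ENNReal.ofReal (1 - (1 - η)) := (ENNReal.ofReal_sub 1 (by linarith)).symm
      _ = ENNReal.ofReal η := by ring_nf
    calc (μ Vᶜ).toReal ≤ (ENNReal.ofReal η).toReal :=
      ENNReal.toReal_mono ENNReal.ofReal_ne_top h2
    _ = η := ENNReal.toReal_ofReal hηpos.le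
  -- choose m and multiplicities
  obtain ⟨m, hm1, hmC⟩ : ∃ m : ℕ, (1:ℝ) ≤ (m:ℝ) ∧ 16*C*(n:ℝ)/ε ≤ (m:ℝ) := by
    refine ⟨max 1 ⌈16*C*(n:ℝ)/ε⌉₊, ?_, ?_⟩
    · exact_mod_cast Nat.one_le_cast.mpr (le_max_left _ _)
    · calc 16*C*(n:ℝ)/ε ≤ (⌈16*C*(n:ℝ)/ε⌉₊ : ℝ) := Nat.le_ceil _
      _ ≤ _ := by exact_mod_cast Nat.cast_le.mpr (le_max_right _ _)
  have hm0 : (0:ℝ) ≤ (m:ℝ) := by linarith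
  have hmbig : 16*C*(n:ℝ) ≤ (m:ℝ) * ε := by
    rw [div_le_iff₀ hε] at hmC
    linarith
  obtain ⟨N, hNlow, hNhigh⟩ : ∃ N : Fin n → ℕ,
      (∀ i, (m:ℝ) * w i < (N i : ℝ)) ∧ (∀ i, (N i : ℝ) ≤ (m:ℝ) * w i + 1) := by
    refine ⟨fun i => ⌊(m:ℝ) * w i⌋₊ + 1, fun i => ?_, fun i => ?_⟩
    · have := Nat.lt_floor_add_one ((m:ℝ) * w i)
      push_cast
      exact this
    · have := Nat.floor_le (mul_nonneg (Nat.cast_nonneg m) (hwnonneg i))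
      push_cast
      linarith
  set m' : ℕ := ∑ i, N i with hm'def
  have hm'cast : ((m':ℕ):ℝ) = ∑ i, (N i : ℝ) := by
    rw [hm'def]; push_cast; ring
  have hcard : Fintype.card ((i : Fin n) × Fin (N i)) = m' := by
    simp [hm'def, Fintype.card_sigma]
  set e : ((i : Fin n) × Fin (N i)) ≃ Fin m' := Fintype.equivFinOfCardEq hcard with hedef
  set z : Fin m' → Y := fun j => c ((e.symm j).1) with hzdef
  clear_value m'
  have hM'low : (m:ℝ) * W < (m':ℝ) := by
    rw [hm'cast, hWdef, Finset.mul_sum]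
    exact Finset.sum_lt_sum_of_nonempty
      (Finset.univ_nonempty_iff.mpr ⟨⟨0, hn⟩⟩) (fun i _ => hNlow i)
  have hM'high : (m':ℝ) ≤ (m:ℝ) * W + n := by
    rw [hm'cast, hWdef, Finset.mul_sum]
    calc ∑ i, (N i:ℝ) ≤ ∑ i : Fin n, ((m:ℝ) * w i + 1) :=
      Finset.sum_le_sum (fun i _ => hNhigh i)
    _ = (∑ i, (m:ℝ) * w i) + n := by
      rw [Finset.sum_add_distrib]; simp
  have hM'pos : (0:ℝ) < (m':ℝ) := by
    have h2 : (0:ℝ) < (m:ℝ) * W := mul_pos (by linarith) hWpos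
    linarith
  have hm'pos : 0 < m' := by exact_mod_cast hM'pos
  refine ⟨m', hm'pos, z, ?_⟩
  intro x
  set a : Fin n → ℝ := fun i => k x (c i) with hadef
  have haC : ∀ i, |a i| ≤ C := fun i => by
    rw [hadef, abs_of_nonneg (hnonneg _ _)]; exact hC _ _
  -- LHS computation
  have hL : (∫ y, k x y ∂(((m':ℕ) : ℝ≥0∞)⁻¹ • ∑ j : Fin m', Measure.dirac (z j)))
      = ((m':ℝ))⁻¹ * ∑ i, (N i : ℝ) * a i := by
    rw [integral_smul_measure, integral_finset_sum_measure (fun j _ => hint x _)]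
    simp only [integral_dirac]
    rw [ENNReal.toReal_inv, ENNReal.toReal_natCast, smul_eq_mul]
    congr 1
    calc ∑ j : Fin m', k x (z j) = ∑ p : (i : Fin n) × Fin (N i), k x (z (e p)) :=
      (Equiv.sum_comp e (fun j => k x (z j))).symm
    _ = ∑ p : (i : Fin n) × Fin (N i), a p.1 := by
      refine Finset.sum_congr rfl (fun p _ => ?_)
      rw [hzdef]; simp [hadef]
    _ = ∑ i, (N i : ℝ) * a i := by
      rw [← Finset.univ_sigma_univ, Finset.sum_sigma]
      simp [mul_comm]
  -- RHS decomposition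
  have hR : ∫ y, k x y ∂μ
      = (∑ i, ∫ y in B i, k x y ∂μ) + ∫ y in Vᶜ, k x y ∂μ := by
    rw [← integral_add_compl hVmeas (hint x μ)]
    congr 1
    rw [hVdef, Measure.restrict_iUnion hBdisj hBmeas, Measure.sum_fintype,
      integral_finset_sum_measure (fun i _ => (hint x μ).restrict)]
  rw [hL, hR]
  -- E2 : block approximation
  have E2 : ∀ i, |w i * a i - ∫ y in B i, k x y ∂μ| ≤ (ε/4) * w i := by
    intro i
    have hconst : ∫ _ in B i, a i ∂μ = w i * a i := by
      rw [setIntegral_const, smul_eq_mul, hwdef]; rfl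
    rw [← hconst, ← integral_sub (integrable_const _) ((hint x μ).restrict)]
    rw [← Real.norm_eq_abs]
    have h4 := norm_setIntegral_le_of_norm_le_const (μ := μ) (s := B i)
      (f := fun y => a i - k x y) (C := ε/4) (measure_lt_top μ _) ?_
    · calc ‖∫ y in B i, (a i - k x y) ∂μ‖ ≤ ε/4 * (μ (B i)).toReal := h4
      _ = ε/4 * w i := by rw [hwdef]
    · intro y hy
      have hyball : y ∈ Metric.ball (c i) δ := hBsub i hy
      have hdist : dist (c i) y < δ := by
        rw [dist_comm]; exact Metric.mem_ball.mp hyball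
      have h5 := hδ (c i) y x hdist
      have h6 : |k x (c i) - k x y| ≤ ε/4 := by
        rw [hsymm x (c i), hsymm x y]; exact le_of_lt h5
      have hval : a i = k x (c i) := rfl
      show ‖a i - k x y‖ ≤ ε/4
      rw [Real.norm_eq_abs, hval]
      exact h6
  -- E3 : remainder
  have E3 : |∫ y in Vᶜ, k x y ∂μ| ≤ ε/8 := by
    rw [← Real.norm_eq_abs]
    have h4 := norm_setIntegral_le_of_norm_le_const (μ := μ) (s := Vᶜ)
      (f := fun y => k x y) (C := C) (measure_lt_top μ _)
      (fun y _ => by rw [Real.norm_eq_abs, abs_of_nonneg (hnonneg x y)]; exact hC x y)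
    calc ‖∫ y in Vᶜ, k x y ∂μ‖ ≤ C * (μ Vᶜ).toReal := h4
    _ ≤ C * η := mul_le_mul_of_nonneg_left hVc hCpos.le
    _ ≤ ε/8 := hηC
  -- E1 : discretization of weights
  have E1 : |(m':ℝ)⁻¹ * ∑ i, (N i : ℝ) * a i - ∑ i, w i * a i| ≤ ε/2 := by
    have hMdiff : |(m':ℝ) - (m:ℝ)| ≤ (m:ℝ)*η + n := by
      have h7 : (0:ℝ) ≤ (m:ℝ) * (1 - W) := mul_nonneg hm0 (by linarith)
      have h8 : (m:ℝ) * (1 - W) ≤ (m:ℝ) * η :=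
        mul_le_mul_of_nonneg_left (by linarith) hm0
      have h9 : (m:ℝ) * W = (m:ℝ) - (m:ℝ) * (1 - W) := by ring
      have hn0 : (0:ℝ) ≤ (n:ℝ) := Nat.cast_nonneg n
      have h10 : (0:ℝ) ≤ (m:ℝ) * η := mul_nonneg hm0 hηpos.le
      rw [abs_le]
      constructor
      · linarith only [hM'low, h9, h8, hn0]
      · linarith only [hM'high, h9, h7, h10]
    have hNi : ∀ i, |(N i:ℝ) - (m':ℝ) * w i| ≤ 1 + w i * ((m:ℝ)*η + n) := by
      intro i
      have h1 : |(N i:ℝ) - (m:ℝ) * w i| ≤ 1 := by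
        rw [abs_le]; constructor
        · linarith [hNlow i]
        · linarith [hNhigh i]
      calc |(N i:ℝ) - (m':ℝ) * w i|
          = |((N i:ℝ) - (m:ℝ) * w i) + w i * ((m:ℝ) - (m':ℝ))| := by ring_nf
      _ ≤ |(N i:ℝ) - (m:ℝ) * w i| + |w i * ((m:ℝ) - (m':ℝ))| := abs_add_le _ _
      _ ≤ 1 + w i * ((m:ℝ)*η + n) := by
          refine add_le_add h1 ?_
          rw [abs_mul, abs_of_nonneg (hwnonneg i), ← abs_sub_comm]
          exact mul_le_mul_of_nonneg_left hMdiff (hwnonneg i)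
    have hS : ∑ i, |(N i:ℝ) - (m':ℝ) * w i| ≤ 2*(n:ℝ) + (m:ℝ)*η := by
      calc ∑ i, |(N i:ℝ) - (m':ℝ) * w i|
          ≤ ∑ i : Fin n, (1 + w i * ((m:ℝ)*η + n)) :=
        Finset.sum_le_sum (fun i _ => hNi i)
      _ = (n:ℝ) + W * ((m:ℝ)*η + n) := by
          rw [Finset.sum_add_distrib, ← Finset.sum_mul]
          simp [hWdef]
      _ ≤ 2*(n:ℝ) + (m:ℝ)*η := by
          have hp2 : W * ((m:ℝ)*η + n) ≤ (m:ℝ)*η + n :=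
            mul_le_of_le_one_left
              (add_nonneg (mul_nonneg hm0 hηpos.le) (Nat.cast_nonneg n)) hWle
          linarith only [hp2]
    have hkey : |∑ i, (N i:ℝ) * a i - (m':ℝ) * ∑ i, w i * a i| ≤ (m':ℝ) * (ε/2) := by
      have t2 := mul_le_mul_of_nonneg_left hηC hm0
      have hMhalf : (m:ℝ)/2 ≤ (m':ℝ) := by
        have h11 := mul_le_mul_of_nonneg_left (show (1:ℝ)/2 ≤ W by linarith only [hWge, hηhalf]) hm0
        linarith only [hM'low, h11]
      have t3 := mul_nonneg (show (0:ℝ) ≤ (m':ℝ) - (m:ℝ)/2 by linarith) hε.le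
      calc |∑ i, (N i:ℝ) * a i - (m':ℝ) * ∑ i, w i * a i|
          = |∑ i, ((N i:ℝ) - (m':ℝ) * w i) * a i| := by
            rw [Finset.mul_sum, ← Finset.sum_sub_distrib]
            congr 1; refine Finset.sum_congr rfl (fun i _ => ?_); ring
      _ ≤ ∑ i, |((N i:ℝ) - (m':ℝ) * w i) * a i| := Finset.abs_sum_le_sum_abs _ _
      _ ≤ ∑ i, |(N i:ℝ) - (m':ℝ) * w i| * C := by
            refine Finset.sum_le_sum (fun i _ => ?_)
            rw [abs_mul]
            exact mul_le_mul_of_nonneg_left (haC i) (abs_nonneg _)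
      _ = (∑ i, |(N i:ℝ) - (m':ℝ) * w i|) * C := by rw [Finset.sum_mul]
      _ ≤ (2*(n:ℝ) + (m:ℝ)*η) * C := mul_le_mul_of_nonneg_right hS hCpos.le
      _ ≤ (m:ℝ) * (ε/4) := by ring_nf; ring_nf at hmbig t2; linarith only [hmbig, t2]
      _ ≤ (m':ℝ) * (ε/2) := by ring_nf; ring_nf at t3; linarith only [t3]
    have hXZ : (m':ℝ)⁻¹ * ∑ i, (N i : ℝ) * a i - ∑ i, w i * a i
        = (m':ℝ)⁻¹ * (∑ i, (N i:ℝ) * a i - (m':ℝ) * ∑ i, w i * a i) := by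
      rw [mul_sub]
      congr 1
      rw [← mul_assoc, inv_mul_cancel₀ (ne_of_gt hM'pos), one_mul]
    calc |(m':ℝ)⁻¹ * ∑ i, (N i : ℝ) * a i - ∑ i, w i * a i|
        = (m':ℝ)⁻¹ * |∑ i, (N i:ℝ) * a i - (m':ℝ) * ∑ i, w i * a i| := by
          rw [hXZ, abs_mul, abs_of_pos (inv_pos.mpr hM'pos)]
    _ ≤ (m':ℝ)⁻¹ * ((m':ℝ) * (ε/2)) :=
        mul_le_mul_of_nonneg_left hkey (inv_pos.mpr hM'pos).le
    _ = ε/2 := by field_simp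
  -- combine
  have hmid : |(∑ i, w i * a i) - ∑ i, ∫ y in B i, k x y ∂μ| ≤ ε/4 := by
    calc |(∑ i, w i * a i) - ∑ i, ∫ y in B i, k x y ∂μ|
        = |∑ i, (w i * a i - ∫ y in B i, k x y ∂μ)| := by
          rw [Finset.sum_sub_distrib]
    _ ≤ ∑ i, |w i * a i - ∫ y in B i, k x y ∂μ| := Finset.abs_sum_le_sum_abs _ _
    _ ≤ ∑ i, (ε/4) * w i := Finset.sum_le_sum (fun i _ => E2 i)
    _ = (ε/4) * W := by rw [← Finset.mul_sum]
    _ ≤ (ε/4) * 1 := mul_le_mul_of_nonneg_left hWle (by linarith)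
    _ = ε/4 := by ring
  set L : ℝ := (m':ℝ)⁻¹ * ∑ i, (N i : ℝ) * a i
  set T : ℝ := ∑ i, w i * a i
  set P : ℝ := ∑ i, ∫ y in B i, k x y ∂μ
  set Q : ℝ := ∫ y in Vᶜ, k x y ∂μ
  have hsplit : L - (P + Q) = (L - T) + (T - P) + (-Q) := by ring
  calc |L - (P + Q)| = |(L - T) + (T - P) + (-Q)| := by rw [hsplit]
  _ ≤ |(L - T) + (T - P)| + |(-Q)| := abs_add_le _ _
  _ ≤ (|L - T| + |T - P|) + |Q| := by rw [abs_neg]; exact add_le_add_left (abs_add_le (L - T) (T - P)) |Q|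
  _ ≤ (ε/2 + ε/4) + ε/8 := add_le_add (add_le_add E1 hmid) E3
  _ ≤ ε := by linarith
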